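/- For a nonzero complex number z, θ(z) = 0 if and only if z = p^n for some integer n; equivalently, the zero set of the normalized Jacobi theta function is exactly the cyclic group generated by p. -/

import Mathlib

noncomputable section

open Finset

/-- The normalized Jacobi theta function `θ(z) = ∏_{j≥0} (1 - z p^j)(1 - p^{j+1}/z)`. -/
def theta (p : ℝ) (z : ℂ) : ℂ :=
  ∏' j : ℕ, ((1 - z * (p : ℂ) ^ j) * (1 - (p : ℂ) ^ (j + 1) / z))

/-- Complex power `q ^ l := exp (l · log q)` for a real base `q`. -/
def qp (q : ℝ) (l : ℂ) : ℂ := Complex.exp (l * (Real.log q : ℂ))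

/-- Elliptic Pochhammer symbol `(a)_n = ∏_{i=0}^{n-1} θ(a q^{2i})` in base `q², p`. -/
def epoch (p q : ℝ) (a : ℂ) (n : ℕ) : ℂ :=
  ∏ i ∈ Finset.range n, theta p (a * qp q (2 * (i : ℂ)))

/-- Elliptic binomial coefficient `[k over l] = ∏_{i=1}^{l} θ(q^{2(k-l+i)})/θ(q^{2i})`. -/
def ellbin (p q : ℝ) (k l : ℕ) : ℂ :=
  ∏ i ∈ Finset.range l,
    theta p (qp q (2 * ((k : ℂ) - (l : ℂ) + (i : ℂ) + 1))) / theta p (qp q (2 * ((i : ℂ) + 1)))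

/-- Entry `a(λ,z)` of the Andrews–Baxter–Forrester `R`-matrix. -/
def Ra (p q : ℝ) (lam z : ℂ) : ℂ :=
  theta p z * theta p (qp q (2 * (lam + 2))) /
    (theta p (qp q 2 * z) * theta p (qp q (2 * (lam + 1))))

/-- Entry `b(λ,z)` of the Andrews–Baxter–Forrester `R`-matrix. -/
def Rb (p q : ℝ) (lam z : ℂ) : ℂ :=
  theta p (qp q 2) * theta p (qp q (-2 * (lam + 1)) * z) /
    (theta p (qp q 2 * z) * theta p (qp q (-2 * (lam + 1))))

/-- Entry `c(λ,z)` of the Andrews–Baxter–Forrester `R`-matrix. -/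
def Rc (p q : ℝ) (lam z : ℂ) : ℂ :=
  theta p (qp q 2) * theta p (qp q (2 * (lam + 1)) * z) /
    (theta p (qp q 2 * z) * theta p (qp q (2 * (lam + 1))))

/-- Entry `d(λ,z)` of the Andrews–Baxter–Forrester `R`-matrix. -/
def Rd (p q : ℝ) (lam z : ℂ) : ℂ :=
  theta p z * theta p (qp q (-2 * lam)) /
    (theta p (qp q 2 * z) * theta p (qp q (-2 * (lam + 1))))

/-- Coefficient `A_k(λ,z)` of the Felder–Varchenko dynamical representation `π^ω`. -/
def Ak (p q : ℝ) (om : ℂ) (k : ℕ) (lam z : ℂ) : ℂ :=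
  qp q (2 * (k : ℂ)) * theta p (qp q (-2 * (lam + 1) - 2 * (k : ℂ))) *
      theta p (z * qp q (om - 2 * (k : ℂ) + 1)) /
    (theta p (qp q (-2 * (lam + 1))) * theta p (z * qp q (om + 1)))

/-- Coefficient `B_k(λ,z)` of the Felder–Varchenko dynamical representation `π^ω`. -/
def Bk (p q : ℝ) (om : ℂ) (k : ℕ) (lam z : ℂ) : ℂ :=
  qp q (k : ℂ) * theta p (qp q 2) *
      theta p (z * qp q (-2 * (lam + 1) + om - 2 * (k : ℂ) - 1)) /
    (theta p (qp q (-2 * (lam + 1))) * theta p (z * qp q (om + 1)))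

/-- Coefficient `C_k(λ,z)` of the Felder–Varchenko dynamical representation `π^ω`;
`C_0 = 0`. -/
def Ck (p q : ℝ) (om : ℂ) (k : ℕ) (lam z : ℂ) : ℂ :=
  if k = 0 then 0
  else
    qp q (-((k : ℂ) - 1)) * theta p (qp q (2 * (k : ℂ))) *
        theta p (qp q (2 * (om - (k : ℂ) + 1))) *
        theta p (z * qp q (2 * (lam + 1) - om + 2 * (k : ℂ) - 1)) /
      (theta p (qp q 2) * theta p (qp q (2 * (lam + 1))) * theta p (z * qp q (om + 1)))

/-- Coefficient `D_k(λ,z)` of the Felder–Varchenko dynamical representation `π^ω`. -/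
def Dk (p q : ℝ) (om : ℂ) (k : ℕ) (lam z : ℂ) : ℂ :=
  theta p (qp q (-2 * (lam + 1 - om + (k : ℂ)))) * theta p (z * qp q (-om + 2 * (k : ℂ) + 1)) /
    (theta p (qp q (-2 * (lam + 1))) * theta p (z * qp q (om + 1)))

/-- `F(μ) = q^μ θ(q^{-2(μ+1)})`. -/
def Fdet (p q : ℝ) (mu : ℂ) : ℂ := qp q mu * theta p (qp q (-2 * (mu + 1)))

/-- The coefficient `C_{kl}(μ)` from the corepresentation matrix elements. -/
def Ckl (p q : ℝ) (k l : ℕ) (mu : ℂ) : ℂ :=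
  ellbin p q k l * epoch p q (qp q (2 * (mu - (l : ℂ) + 2))) l /
    epoch p q (qp q (2 * (mu + (k : ℂ) - 2 * (l : ℂ) + 2))) l

/-- The terminating balanced very-well-poised elliptic hypergeometric series
`₁₀ω₉(a₁; a₄,…,a₁₀)`, truncated at `n`. -/
def tenW9 (p q : ℝ) (n : ℕ) (a1 a4 a5 a6 a7 a8 a9 a10 : ℂ) : ℂ :=
  ∑ k ∈ Finset.range (n + 1),
    theta p (a1 * qp q (4 * (k : ℂ))) / theta p a1 *
      (epoch p q a1 k * epoch p q a4 k * epoch p q a5 k * epoch p q a6 k * epoch p q a7 k *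
        epoch p q a8 k * epoch p q a9 k * epoch p q a10 k * qp q (2 * (k : ℂ))) /
      (epoch p q (qp q 2) k * epoch p q (a1 * qp q 2 / a4) k * epoch p q (a1 * qp q 2 / a5) k *
        epoch p q (a1 * qp q 2 / a6) k * epoch p q (a1 * qp q 2 / a7) k *
        epoch p q (a1 * qp q 2 / a8) k * epoch p q (a1 * qp q 2 / a9) k *
        epoch p q (a1 * qp q 2 / a10) k)

/-- The product of all theta factors appearing in denominators of the terms of
`tenW9 p q n a1 a4 … a10` (including the `θ(a₁)` from the very-well-poised prefactor). -/
def tenW9Den (p q : ℝ) (n : ℕ) (a1 a4 a5 a6 a7 a8 a9 a10 : ℂ) : ℂ :=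
  theta p a1 * epoch p q (qp q 2) n * epoch p q (a1 * qp q 2 / a4) n *
    epoch p q (a1 * qp q 2 / a5) n * epoch p q (a1 * qp q 2 / a6) n *
    epoch p q (a1 * qp q 2 / a7) n * epoch p q (a1 * qp q 2 / a8) n *
    epoch p q (a1 * qp q 2 / a9) n * epoch p q (a1 * qp q 2 / a10) n

/-- For nonzero complex `z`, `θ(z) = 0` iff `z = p^n` for some integer `n`:
the zero set of the normalized Jacobi theta function is exactly the cyclic
group generated by `p`. -/
theorem theta_zero_iff (p : ℝ) (hp0 : 0 < p) (hp1 : p < 1) (z : ℂ) (hz : z ≠ 0) :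
    theta p z = 0 ↔ ∃ n : ℤ, z = (p : ℂ) ^ n := by
  have hpC : (p : ℂ) ≠ 0 := by exact_mod_cast hp0.ne'
  set f : ℕ → ℂ := fun j => (1 - z * (p : ℂ) ^ j) * (1 - (p : ℂ) ^ (j + 1) / z) with hf
  -- a factor vanishes iff z is the corresponding power of p
  have hfac : ∀ j : ℕ, f j = 0 ↔ z = (p : ℂ) ^ (-(j : ℤ)) ∨ z = (p : ℂ) ^ ((j : ℤ) + 1) := by
    intro j
    rw [hf, mul_eq_zero, sub_eq_zero, sub_eq_zero]
    have hcast : ∀ j : ℕ, (p : ℂ) ^ ((j : ℤ) + 1) = (p : ℂ) ^ (j + 1) := by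
      intro j
      rw [show ((j : ℤ) + 1) = ((j + 1 : ℕ) : ℤ) by push_cast; ring, zpow_natCast]
    constructor
    · rintro (h | h)
      · left
        rw [zpow_neg, zpow_natCast]
        exact eq_inv_of_mul_eq_one_left h.symm
      · right
        rw [eq_comm, div_eq_one_iff_eq hz] at h
        rw [hcast j]
        exact h.symm
    · rintro (h | h)
      · left
        rw [h, zpow_neg, zpow_natCast]
        field_simp
      · right
        rw [h, hcast j, div_self (pow_ne_zero _ hpC)]
  constructor
  · -- forward direction, by contraposition
    intro h0
    by_contra hcon
    push_neg at hcon
    have hne : ∀ j, f j ≠ 0 := by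
      intro j hj
      rcases (hfac j).1 hj with h | h
      · exact hcon _ h
      · exact hcon _ h
    -- bound on the deviation from 1
    set C : ℝ := ‖z‖ + p / ‖z‖ + p with hC
    have hzpos : 0 < ‖z‖ := norm_pos_iff.2 hz
    have hppow : ∀ k : ℕ, ‖(p : ℂ) ^ k‖ = p ^ k := by
      intro k
      rw [norm_pow, Complex.norm_real, Real.norm_eq_abs, abs_of_pos hp0]
    have hgbound : ∀ j : ℕ, ‖f j - 1‖ ≤ C * p ^ j := by
      intro j
      have he : f j - 1 = -(z * (p : ℂ) ^ j) - (p : ℂ) ^ (j + 1) / z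
          + z * (p : ℂ) ^ j * ((p : ℂ) ^ (j + 1) / z) := by
        rw [hf]; ring
      rw [he]
      have h1 : ‖-(z * (p : ℂ) ^ j)‖ = ‖z‖ * p ^ j := by
        rw [norm_neg, norm_mul, hppow]
      have h2 : ‖(p : ℂ) ^ (j + 1) / z‖ = p ^ (j + 1) / ‖z‖ := by
        rw [norm_div, hppow]
      have h3 : ‖z * (p : ℂ) ^ j * ((p : ℂ) ^ (j + 1) / z)‖ = p ^ j * p ^ (j + 1) := by
        have he3 : z * (p : ℂ) ^ j * ((p : ℂ) ^ (j + 1) / z) = (p : ℂ) ^ j * (p : ℂ) ^ (j + 1) := by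
          field_simp
        rw [he3, norm_mul, hppow, hppow]
      calc ‖-(z * (p : ℂ) ^ j) - (p : ℂ) ^ (j + 1) / z
            + z * (p : ℂ) ^ j * ((p : ℂ) ^ (j + 1) / z)‖
          ≤ ‖-(z * (p : ℂ) ^ j) - (p : ℂ) ^ (j + 1) / z‖
            + ‖z * (p : ℂ) ^ j * ((p : ℂ) ^ (j + 1) / z)‖ := norm_add_le _ _
        _ ≤ ‖-(z * (p : ℂ) ^ j)‖ + ‖(p : ℂ) ^ (j + 1) / z‖
            + ‖z * (p : ℂ) ^ j * ((p : ℂ) ^ (j + 1) / z)‖ := by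
              gcongr; exact norm_sub_le _ _
        _ = ‖z‖ * p ^ j + p ^ (j + 1) / ‖z‖ + p ^ j * p ^ (j + 1) := by rw [h1, h2, h3]
        _ ≤ ‖z‖ * p ^ j + p ^ (j + 1) / ‖z‖ + 1 * p ^ (j + 1) := by
              gcongr
              exact pow_le_one₀ hp0.le hp1.le
        _ = C * p ^ j := by rw [hC, pow_succ]; ring
    have hCpos : 0 ≤ C := by positivity
    have hsumC : Summable (fun j : ℕ => C * p ^ j) :=
      (summable_geometric_of_lt_one hp0.le hp1).mul_left C
    -- eventually the deviation is small
    have htend : Filter.Tendsto (fun j : ℕ => C * p ^ j) Filter.atTop (nhds 0) := by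
      simpa using (tendsto_pow_atTop_nhds_zero_of_lt_one hp0.le hp1).const_mul C
    have hev : ∀ᶠ j : ℕ in Filter.atTop, ‖f j - 1‖ ≤ 1 / 2 := by
      filter_upwards [htend.eventually_le_const (by norm_num : (0:ℝ) < 1/2)] with j hj
      exact (hgbound j).trans hj
    -- summability of the logs
    have hlog : Summable (fun j : ℕ => Complex.log (f j)) := by
      apply Summable.of_norm_bounded_eventually_nat (g := fun j => 3 / 2 * (C * p ^ j))
        (hsumC.mul_left _)
      filter_upwards [hev] with j hj
      have : f j = 1 + (f j - 1) := by ring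
      rw [this]
      calc ‖Complex.log (1 + (f j - 1))‖ ≤ 3 / 2 * ‖f j - 1‖ :=
            Complex.norm_log_one_add_half_le_self hj
        _ ≤ 3 / 2 * (C * p ^ j) := by gcongr; exact hgbound j
    have hP : HasProd f (Complex.exp (∑' j, Complex.log (f j))) := by
      have h1 := hlog.hasSum.cexp
      have h2 : (Complex.exp ∘ fun j => Complex.log (f j)) = f :=
        funext fun j => Complex.exp_log (hne j)
      rwa [h2] at h1
    rw [theta] at h0
    rw [hP.tprod_eq] at h0
    exact Complex.exp_ne_zero _ h0
  · -- backward direction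
    rintro ⟨n, hn⟩
    obtain ⟨j, hj0⟩ : ∃ j : ℕ, f j = 0 := by
      rcases le_or_gt n 0 with h | h
      · refine ⟨(-n).toNat, (hfac _).2 (Or.inl ?_)⟩
        rw [hn]
        congr 1
        omega
      · refine ⟨(n - 1).toNat, (hfac _).2 (Or.inr ?_)⟩
        rw [hn]
        congr 1
        omega
    have hP : HasProd f 0 := by
      have hev : ∀ᶠ s : Finset ℕ in Filter.atTop, ∏ i ∈ s, f i = 0 := by
        filter_upwards [Filter.eventually_ge_atTop ({j} : Finset ℕ)] with s hs
        exact Finset.prod_eq_zero (hs (Finset.mem_singleton_self j)) hj0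
      exact (tendsto_const_nhds.congr' (hev.mono fun s hs => hs.symm) : _)
    rw [theta, hP.tprod_eq]

end
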